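/- arXiv:1907.07335 — 4 statements merged into one kernel-verified Lean document; each statement's English description precedes it below -/
import Mathlib

section
/- There exists a constant C > 0 such that for all a ≥ 1, ∫_{a}^{∞} (s² − a²)^{−1/2} e^{−2s} ds ≤ C a^{−1/2} e^{−2a}. -/
open MeasureTheory Set

/-- There exists `C > 0` such that for all `a ≥ 1`,
`∫_{a}^{∞} (s² − a²)^{−1/2} e^{−2s} ds ≤ C a^{−1/2} e^{−2a}`. -/
theorem tail_integral_bound :
    ∃ C : ℝ, 0 < C ∧ ∀ a : ℝ, 1 ≤ a →
      (∫ s in Set.Ioi a, Real.exp (-2 * s) / Real.sqrt (s ^ 2 - a ^ 2))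
        ≤ C * a ^ (-(1 : ℝ) / 2) * Real.exp (-2 * a) := by
  refine ⟨Real.sqrt Real.pi, Real.sqrt_pos.2 Real.pi_pos, fun a ha => ?_⟩
  have ha0 : (0:ℝ) < a := lt_of_lt_of_le one_pos ha
  -- the translated kernel
  set h : ℝ → ℝ := fun t => t ^ ((1:ℝ)/2 - 1) * Real.exp (-(2 * t)) with hh
  have hbase : IntegrableOn h (Ioi 0) := by
    have H := integrableOn_rpow_mul_exp_neg_mul_rpow
      (p := 1) (s := (1:ℝ)/2 - 1) (b := 2) (by norm_num) one_pos (by norm_num)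
    refine H.congr_fun (fun x hx => ?_) measurableSet_Ioi
    beta_reduce
    rw [Real.rpow_one, neg_mul]
  have emb : MeasurableEmbedding (fun x : ℝ => x + a) :=
    (Homeomorph.addRight a).isClosedEmbedding.measurableEmbedding
  have hpre : (fun x : ℝ => x + a) ⁻¹' (Ioi a) = Ioi 0 := by
    ext x; simp
  have hcompfun : (fun s : ℝ => h (s - a)) ∘ (fun x : ℝ => x + a) = h := by
    funext x; simp
  -- integrability of translated kernel on `Ioi a`
  have hcomp : IntegrableOn (fun s : ℝ => h (s - a)) (Ioi a) := by
    have := ((measurePreserving_add_right volume a).integrableOn_comp_preimage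
      emb (f := fun s : ℝ => h (s - a)) (s := Ioi a))
    rw [hcompfun, hpre] at this
    exact this.1 hbase
  -- value of the translated integral
  have hval : (∫ s in Ioi a, h (s - a)) = ((1:ℝ)/2) ^ ((1:ℝ)/2) * Real.Gamma (1/2) := by
    rw [← (measurePreserving_add_right volume a).setIntegral_preimage_emb
      emb (fun s : ℝ => h (s - a)) (Ioi a)]
    have : (∫ x in (fun x : ℝ => x + a) ⁻¹' (Ioi a), h (x + a - a))
        = ∫ x in Ioi 0, h x := by
      rw [hpre]; norm_num
    rw [this]; simp only [hh]
    exact Real.integral_rpow_mul_exp_neg_mul_Ioi (by norm_num) (by norm_num)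
  set g : ℝ → ℝ := fun s => (Real.sqrt (2*a))⁻¹ * Real.exp (-2*a) * h (s - a) with hg
  have hgint : IntegrableOn g (Ioi a) := (hcomp.const_mul _)
  -- pointwise bound
  have hle : (∫ s in Ioi a, Real.exp (-2 * s) / Real.sqrt (s ^ 2 - a ^ 2))
      ≤ ∫ s in Ioi a, g s := by
    refine integral_mono_of_nonneg (ae_of_all _ fun s => by positivity) hgint ?_
    refine (ae_restrict_iff' measurableSet_Ioi).2 (ae_of_all _ fun s hs => ?_)
    have hsa : 0 < s - a := sub_pos.2 hs
    have h2a : (0:ℝ) < 2 * a := by linarith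
    have hd : Real.sqrt (2*a) * Real.sqrt (s - a) ≤ Real.sqrt (s ^ 2 - a ^ 2) := by
      rw [← Real.sqrt_mul h2a.le]
      apply Real.sqrt_le_sqrt
      nlinarith
    have hdpos : 0 < Real.sqrt (2*a) * Real.sqrt (s - a) := by positivity
    have step1 : Real.exp (-2 * s) / Real.sqrt (s ^ 2 - a ^ 2)
        ≤ Real.exp (-2 * s) / (Real.sqrt (2*a) * Real.sqrt (s - a)) := by
      gcongr
    refine step1.trans_eq ?_
    have hex : Real.exp (-2 * s) = Real.exp (-2*a) * Real.exp (-(2 * (s - a))) := by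
      rw [← Real.exp_add]; ring_nf
    have hrpow : (s - a) ^ ((1:ℝ)/2 - 1) = (Real.sqrt (s - a))⁻¹ := by
      rw [show ((1:ℝ)/2 - 1) = -(1/2) by norm_num, Real.rpow_neg hsa.le,
        ← Real.sqrt_eq_rpow]
    rw [hg]
    simp only [hh]
    rw [hrpow, hex]
    field_simp
  -- compute the RHS integral and conclude
  have hgval : (∫ s in Ioi a, g s)
      = (Real.sqrt (2*a))⁻¹ * Real.exp (-2*a) * (((1:ℝ)/2) ^ ((1:ℝ)/2) * Real.Gamma (1/2)) := by
    rw [hg]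
    rw [integral_const_mul, hval]
  refine hle.trans ?_
  rw [hgval]
  have h2 : Real.sqrt 2 * Real.sqrt 2 = 2 := Real.mul_self_sqrt (by norm_num)
  have hs2 : Real.sqrt (2*a) = Real.sqrt 2 * Real.sqrt a := Real.sqrt_mul (by norm_num) a
  have hhalf : ((1:ℝ)/2) ^ ((1:ℝ)/2) = (Real.sqrt 2)⁻¹ := by
    rw [← Real.sqrt_eq_rpow, one_div, Real.sqrt_inv]
  have hga : Real.Gamma (1/2) = Real.sqrt Real.pi := Real.Gamma_one_half_eq
  have hap : a ^ (-(1:ℝ)/2) = (Real.sqrt a)⁻¹ := by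
    rw [show (-(1:ℝ)/2) = -(1/2) by norm_num, Real.rpow_neg ha0.le, ← Real.sqrt_eq_rpow]
  rw [hs2, hhalf, hga, hap]
  have hsa : 0 < Real.sqrt a := Real.sqrt_pos.2 ha0
  have hs2p : 0 < Real.sqrt 2 := Real.sqrt_pos.2 (by norm_num)
  have hpi : 0 < Real.sqrt Real.pi := Real.sqrt_pos.2 Real.pi_pos
  have hE : 0 < Real.exp (-2*a) := Real.exp_pos _
  rw [mul_inv]
  have key : (Real.sqrt 2)⁻¹ * (Real.sqrt 2)⁻¹ = (2:ℝ)⁻¹ := by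
    rw [← mul_inv, h2]
  nlinarith [mul_pos hsa hE, mul_pos hpi hE, mul_pos (mul_pos hpi hE) (inv_pos.2 hsa)]
end

section
/- There exist constants 0 < c ≤ C such that for all a ≥ 1, c · a^{−1/2} e^{−2a} ≤ ∫_{ℝ} (x₁² + a²)^{−1/2} · exp(−2 (x₁² + a²)^{1/2}) dx₁ ≤ C · a^{−1/2} e^{−2a}. -/
open MeasureTheory

lemma aux_sqrt_lower {a : ℝ} (x : ℝ) (ha : 0 < a) :
    a ≤ Real.sqrt (x ^ 2 + a ^ 2) := by
  have : a = Real.sqrt (a ^ 2) := (Real.sqrt_sq ha.le).symm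
  rw [this]
  exact Real.sqrt_le_sqrt (by nlinarith)

lemma aux_exp_abs_bound (x : ℝ) : Real.exp (-|x|) ≤ 4 * (1 + x ^ 2)⁻¹ := by
  have h := Real.add_one_le_exp (|x| / 2)
  have he : Real.exp (|x| / 2) * Real.exp (|x| / 2) = Real.exp |x| := by
    rw [← Real.exp_add]; ring_nf
  have key : 1 + x ^ 2 ≤ 4 * Real.exp |x| := by
    nlinarith [abs_nonneg x, sq_abs x, Real.exp_pos (|x| / 2)]
  have h1x : (0 : ℝ) < 1 + x ^ 2 := by positivity
  have h4 : 4 * (1 + x ^ 2)⁻¹ = 4 / (1 + x ^ 2) := by rw [div_eq_mul_inv]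
  rw [Real.exp_neg, inv_eq_one_div, h4, div_le_div_iff₀ (Real.exp_pos _) h1x]
  nlinarith

lemma aux_key_bound {a : ℝ} (ha : 1 ≤ a) (x : ℝ) :
    Real.exp (-2 * Real.sqrt (x ^ 2 + a ^ 2)) / Real.sqrt (x ^ 2 + a ^ 2) ≤
      Real.exp (-2 * a) / a *
        (Real.exp (-(1 / (3 * a)) * x ^ 2) + 4 * (1 + x ^ 2)⁻¹) := by
  have ha0 : (0 : ℝ) < a := by linarith
  set s := Real.sqrt (x ^ 2 + a ^ 2) with hs
  have hsa : a ≤ s := aux_sqrt_lower x ha0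
  have hs0 : 0 < s := lt_of_lt_of_le ha0 hsa
  have hssq : s ^ 2 = x ^ 2 + a ^ 2 := Real.sq_sqrt (by positivity)
  have hx_le_s : |x| ≤ s := by nlinarith [abs_nonneg x, sq_abs x]
  rcases le_or_gt (|x|) (2 * a) with hcase | hcase
  · have hs3 : s ≤ 3 * a := by
      have hle : x ^ 2 + a ^ 2 ≤ (3 * a) ^ 2 := by nlinarith [abs_mul_abs_self x, mul_le_mul hcase hcase (abs_nonneg x) (by linarith : (0:ℝ) ≤ 2 * a)]
      calc s ≤ Real.sqrt ((3 * a) ^ 2) := Real.sqrt_le_sqrt hle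
        _ = 3 * a := Real.sqrt_sq (by positivity)
    have hkey : 2 * a + x ^ 2 / (3 * a) ≤ 2 * s := by
      rw [← sub_nonneg]
      have h3 : x ^ 2 / (3 * a) ≤ 2 * (s - a) := by
        rw [div_le_iff₀ (by positivity)]
        nlinarith
      linarith
    have h1 : Real.exp (-2 * s) ≤ Real.exp (-2 * a) * Real.exp (-(1 / (3 * a)) * x ^ 2) := by
      rw [← Real.exp_add]
      apply Real.exp_le_exp.mpr
      have hd : (1 / (3 * a)) * x ^ 2 = x ^ 2 / (3 * a) := by ring
      nlinarith [hkey]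
    calc Real.exp (-2 * s) / s
        ≤ (Real.exp (-2 * a) * Real.exp (-(1 / (3 * a)) * x ^ 2)) / a :=
          div_le_div₀ (by positivity) h1 ha0 hsa
      _ = Real.exp (-2 * a) / a * Real.exp (-(1 / (3 * a)) * x ^ 2) := by ring
      _ ≤ _ := by
          have h4 : (0 : ℝ) ≤ Real.exp (-2 * a) / a * (4 * (1 + x ^ 2)⁻¹) := by positivity
          nlinarith [h4]
  · have hkey : 2 * a + |x| ≤ 2 * s := by nlinarith
    have h1 : Real.exp (-2 * s) ≤ Real.exp (-2 * a) * Real.exp (-|x|) := by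
      rw [← Real.exp_add]
      apply Real.exp_le_exp.mpr
      linarith
    calc Real.exp (-2 * s) / s
        ≤ (Real.exp (-2 * a) * Real.exp (-|x|)) / a :=
          div_le_div₀ (by positivity) h1 ha0 hsa
      _ = Real.exp (-2 * a) / a * Real.exp (-|x|) := by ring
      _ ≤ Real.exp (-2 * a) / a * (4 * (1 + x ^ 2)⁻¹) := by
          apply mul_le_mul_of_nonneg_left (aux_exp_abs_bound x) (by positivity)
      _ ≤ _ := by
          have h4 : (0 : ℝ) ≤ Real.exp (-2 * a) / a * Real.exp (-(1 / (3 * a)) * x ^ 2) := by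
            positivity
          nlinarith [h4]

/-- There exist constants `0 < c ≤ C` such that for all `a ≥ 1`,
`c a^{−1/2} e^{−2a} ≤ ∫_ℝ (x₁² + a²)^{−1/2} exp(−2(x₁² + a²)^{1/2}) dx₁ ≤ C a^{−1/2} e^{−2a}`. -/
theorem trace_line_integral_comparison :
    ∃ c C : ℝ, 0 < c ∧ c ≤ C ∧ ∀ a : ℝ, 1 ≤ a →
      c * a ^ (-(1 : ℝ) / 2) * Real.exp (-2 * a) ≤
        (∫ x : ℝ, Real.exp (-2 * Real.sqrt (x ^ 2 + a ^ 2)) / Real.sqrt (x ^ 2 + a ^ 2)) ∧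
      (∫ x : ℝ, Real.exp (-2 * Real.sqrt (x ^ 2 + a ^ 2)) / Real.sqrt (x ^ 2 + a ^ 2)) ≤
        C * a ^ (-(1 : ℝ) / 2) * Real.exp (-2 * a) := by
  refine ⟨Real.exp (-1), Real.sqrt (3 * Real.pi) + 4 * Real.pi, Real.exp_pos _, ?_, ?_⟩
  · have h1 : Real.exp (-1) < 1 := Real.exp_lt_one_iff.mpr (by norm_num)
    nlinarith [Real.sqrt_nonneg (3 * Real.pi), Real.pi_gt_three]
  intro a ha
  have ha0 : (0 : ℝ) < a := by linarith
  set f : ℝ → ℝ := fun x => Real.exp (-2 * Real.sqrt (x ^ 2 + a ^ 2)) / Real.sqrt (x ^ 2 + a ^ 2)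
    with hfdef
  have hcont : Continuous f := by
    apply Continuous.div
    · exact Real.continuous_exp.comp (continuous_const.mul (Real.continuous_sqrt.comp
        (by continuity)))
    · exact Real.continuous_sqrt.comp (by continuity)
    · intro x; exact ne_of_gt (lt_of_lt_of_le ha0 (aux_sqrt_lower x ha0))
  have hfnn : ∀ x, 0 ≤ f x := fun x => div_nonneg (Real.exp_pos _).le (Real.sqrt_nonneg _)
  set g : ℝ → ℝ := fun x =>
    Real.exp (-2 * a) / a * (Real.exp (-(1 / (3 * a)) * x ^ 2) + 4 * (1 + x ^ 2)⁻¹) with hgdef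
  have hgauss : Integrable (fun x : ℝ => Real.exp (-(1 / (3 * a)) * x ^ 2)) :=
    integrable_exp_neg_mul_sq (by positivity)
  have hg_int : Integrable g :=
    ((hgauss.add (integrable_inv_one_add_sq.const_mul 4)).const_mul _)
  have hf_int : Integrable f := by
    apply Integrable.mono' hg_int hcont.aestronglyMeasurable
    filter_upwards with x
    rw [Real.norm_eq_abs, abs_of_nonneg (hfnn x)]
    exact aux_key_bound ha x
  have hsqa : 0 < Real.sqrt a := Real.sqrt_pos.mpr ha0
  have haa : Real.sqrt a * Real.sqrt a = a := Real.mul_self_sqrt ha0.le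
  have hsq1 : 1 ≤ Real.sqrt a := by nlinarith
  have hr : a ^ (-(1 : ℝ) / 2) = (Real.sqrt a)⁻¹ := by
    rw [neg_div, Real.rpow_neg ha0.le, Real.sqrt_eq_rpow]
  constructor
  · -- lower bound
    have hconst : ∀ x ∈ Set.Icc (-Real.sqrt a) (Real.sqrt a),
        Real.exp (-(2 * a + 1)) / (2 * a) ≤ f x := by
      intro x hx
      have hx2 : x ^ 2 ≤ a := by
        have := sq_le_sq' hx.1 hx.2
        nlinarith
      have hsle : Real.sqrt (x ^ 2 + a ^ 2) ≤ a + 1 / 2 := by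
        have h1 : x ^ 2 + a ^ 2 ≤ (a + 1 / 2) ^ 2 := by nlinarith
        calc Real.sqrt (x ^ 2 + a ^ 2) ≤ Real.sqrt ((a + 1 / 2) ^ 2) := Real.sqrt_le_sqrt h1
          _ = a + 1 / 2 := Real.sqrt_sq (by positivity)
      have hs2a : Real.sqrt (x ^ 2 + a ^ 2) ≤ 2 * a := by linarith
      have hspos : 0 < Real.sqrt (x ^ 2 + a ^ 2) :=
        lt_of_lt_of_le ha0 (aux_sqrt_lower x ha0)
      exact div_le_div₀ (Real.exp_pos _).le
        (Real.exp_le_exp.mpr (by linarith)) hspos hs2a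
    have hset := setIntegral_ge_of_const_le measurableSet_Icc
      (measure_Icc_lt_top).ne hconst hf_int.integrableOn
    have hvol : (volume (Set.Icc (-Real.sqrt a) (Real.sqrt a))).toReal = 2 * Real.sqrt a := by
      rw [Real.volume_Icc, ENNReal.toReal_ofReal (by linarith)]
      ring
    rw [measureReal_def, hvol, smul_eq_mul, mul_comm (2 * Real.sqrt a)] at hset
    have hv : (Real.sqrt a)⁻¹ = Real.sqrt a / a := by
      rw [eq_div_iff ha0.ne']
      rw [← haa]; field_simp; rw [Real.sqrt_sq hsqa.le]
    have heq : Real.exp (-(2 * a + 1)) / (2 * a) * (2 * Real.sqrt a) =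
        Real.exp (-1) * (Real.sqrt a)⁻¹ * Real.exp (-2 * a) := by
      rw [show -(2 * a + 1) = -2 * a + -1 by ring, Real.exp_add, hv]
      field_simp
    rw [heq] at hset
    rw [hr]
    exact le_trans hset (setIntegral_le_integral hf_int (Filter.Eventually.of_forall hfnn))
  · -- upper bound
    have hmono : (∫ x : ℝ, f x) ≤ ∫ x : ℝ, g x :=
      integral_mono hf_int hg_int (aux_key_bound ha)
    have hgval : (∫ x : ℝ, g x) =
        Real.exp (-2 * a) / a * (Real.sqrt (3 * Real.pi) * Real.sqrt a + 4 * Real.pi) := by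
      rw [hgdef]
      rw [integral_const_mul, integral_add hgauss (integrable_inv_one_add_sq.const_mul 4),
        integral_gaussian, integral_const_mul, integral_univ_inv_one_add_sq]
      congr 2
      rw [show Real.pi / (1 / (3 * a)) = 3 * Real.pi * a by field_simp,
        Real.sqrt_mul (by positivity)]
    rw [hr]
    refine le_trans hmono ?_
    rw [hgval]
    have hinv : (Real.sqrt a)⁻¹ * a = Real.sqrt a := by
      rw [← haa]; field_simp; rw [Real.sqrt_sq hsqa.le]
    have hv : (Real.sqrt a)⁻¹ = Real.sqrt a / a := by
      rw [eq_div_iff ha0.ne']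
      rw [← haa]; field_simp; rw [Real.sqrt_sq hsqa.le]
    have hkey : (Real.sqrt (3 * Real.pi) + 4 * Real.pi) * (Real.sqrt a)⁻¹ * Real.exp (-2 * a) =
        (Real.sqrt (3 * Real.pi) + 4 * Real.pi) * Real.exp (-2 * a) / a * Real.sqrt a := by
      rw [hv]; ring
    rw [hkey]
    rw [div_mul_eq_mul_div, div_mul_eq_mul_div, div_le_div_iff₀ ha0 ha0]
    have h4 : (0:ℝ) ≤ a * Real.exp (-2 * a) * Real.pi * (Real.sqrt a - 1) :=
      mul_nonneg (mul_nonneg (mul_pos ha0 (Real.exp_pos _)).le Real.pi_pos.le)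
        (by linarith)
    nlinarith [h4]
end

section
/- Let H be a real Hilbert space, L : D(L) ⊂ H → H a densely defined self-adjoint operator, and U₂ ∈ D(L) with U₂ ≠ 0. Let P₂ : H → H be the orthogonal projection onto span{U₂} and V = (I − P₂)H = U₂^⊥. Define L̃ : D(L) ∩ V → V by L̃u = (I − P₂)Lu. Then L̃, viewed as a densely defined operator on the Hilbert space V, is self-adjoint, with domain D(L̃*) = D(L) ∩ V. -/
open scoped RealInnerProductSpace

/-- Given an unbounded operator `L` on `H` and a closed subspace `K` admitting an orthogonal
projection, this is the compressed operator `L̃ = (I − P) L` on `K`, with domain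
`D(L̃) = D(L) ∩ K`, where `I − P` is the orthogonal projection of `H` onto `K`. -/
noncomputable def compressedOp {H : Type*} [NormedAddCommGroup H] [InnerProductSpace ℝ H]
    (K : Submodule ℝ H) [K.HasOrthogonalProjection] (L : H →ₗ.[ℝ] H) : K →ₗ.[ℝ] K :=
  { domain := L.domain.comap K.subtype
    toFun := K.orthogonalProjectionOnto.toLinearMap.comp
      (L.toFun.comp (K.subtype.restrict (fun _ hx => hx))) }

section Aux

variable {H : Type*} [NormedAddCommGroup H] [InnerProductSpace ℝ H]

theorem compressedOp_apply (K : Submodule ℝ H) [K.HasOrthogonalProjection] (L : H →ₗ.[ℝ] H)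
    (x : (compressedOp K L).domain) :
    compressedOp K L x = K.orthogonalProjectionOnto (L ⟨((x : K) : H), x.2⟩) := rfl

theorem inner_orthProj (K : Submodule ℝ H) [K.HasOrthogonalProjection] (w : H) {u : H}
    (hu : u ∈ K) : ⟪((K.orthogonalProjectionOnto w : K) : H), u⟫ = ⟪w, u⟫ := by
  have h := Submodule.starProjection_inner_eq_zero (K := K) w u hu
  rw [inner_sub_left, Submodule.starProjection_apply] at h
  linarith

theorem inner_orthProj' (K : Submodule ℝ H) [K.HasOrthogonalProjection] (w : H) {u : H}
    (hu : u ∈ K) : ⟪u, ((K.orthogonalProjectionOnto w : K) : H)⟫ = ⟪u, w⟫ := by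
  rw [real_inner_comm, inner_orthProj K w hu, real_inner_comm]

end Aux

/-- Let `L` be a densely defined self-adjoint operator on a real Hilbert space `H` and
`U₂ ∈ D(L)`, `U₂ ≠ 0`.  Let `V = U₂^⊥` and define `L̃ : D(L) ∩ V → V`, `L̃u = (I − P₂) L u`,
where `P₂` is the orthogonal projection onto `span{U₂}`.  Then `L̃`, viewed as a densely defined
operator on the Hilbert space `V`, is self-adjoint with `D(L̃*) = D(L) ∩ V`. -/
theorem compressed_operator_selfAdjoint
    {H : Type*} [NormedAddCommGroup H] [InnerProductSpace ℝ H] [CompleteSpace H]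
    (L : H →ₗ.[ℝ] H) (hdense : Dense (L.domain : Set H)) (hL : IsSelfAdjoint L)
    (U₂ : H) (hU₂dom : U₂ ∈ L.domain) (hU₂ : U₂ ≠ 0) :
    IsSelfAdjoint (compressedOp (ℝ ∙ U₂)ᗮ L) ∧
    (compressedOp (ℝ ∙ U₂)ᗮ L).adjoint.domain = L.domain.comap ((ℝ ∙ U₂)ᗮ).subtype := by
  set K : Submodule ℝ H := (ℝ ∙ U₂)ᗮ with hKdef
  set T : ↥K →ₗ.[ℝ] ↥K := compressedOp K L with hTdef
  have heq : L.adjoint = L := hL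
  have hnU₂ : ‖U₂‖ ^ 2 ≠ 0 := pow_ne_zero 2 (norm_ne_zero_iff.mpr hU₂)
  -- density of the domain of T
  have hTdense : Dense (T.domain : Set K) := by
    rw [Metric.dense_iff]
    intro v r hr
    obtain ⟨z, hz_ball, hz_dom⟩ := Metric.dense_iff.mp hdense (v : H) r hr
    refine ⟨K.orthogonalProjectionOnto z, ?_, ?_⟩
    · rw [Metric.mem_ball, Subtype.dist_eq, dist_eq_norm]
      have h1 : ((K.orthogonalProjectionOnto z : K) : H) - (v : H)
          = ((K.orthogonalProjectionOnto (z - (v : H)) : K) : H) := by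
        rw [map_sub]
        have h2 : K.orthogonalProjectionOnto ((v : H)) = v :=
          Submodule.orthogonalProjectionOnto_mem_subspace_eq_self v
        rw [h2]
        rfl
      rw [h1]
      have hb := K.orthogonalProjectionOnto.le_opNorm (z - (v : H))
      have hb2 := Submodule.orthogonalProjectionOnto_norm_le (K := K)
      have hb3 : ‖((K.orthogonalProjectionOnto (z - (v : H)) : K) : H)‖
          = ‖K.orthogonalProjectionOnto (z - (v : H))‖ := rfl
      have hzb : ‖z - (v : H)‖ < r := by rwa [Metric.mem_ball, dist_eq_norm] at hz_ball
      nlinarith [norm_nonneg (z - (v : H)), norm_nonneg (K.orthogonalProjectionOnto (z - (v : H)))]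
    · show ((K.orthogonalProjectionOnto z : K) : H) ∈ L.domain
      have hsum := Submodule.starProjection_add_starProjection_orthogonal (K := K) z
      have h2 : ((Kᗮ.orthogonalProjectionOnto z : Kᗮ) : H) ∈ L.domain := by
        apply (Submodule.span_singleton_le_iff_mem U₂ L.domain).mpr hU₂dom
        have hoo : (ℝ ∙ U₂)ᗮᗮ ≤ (ℝ ∙ U₂) := le_of_eq (Submodule.orthogonal_orthogonal _)
        exact hoo (Kᗮ.orthogonalProjectionOnto z).2
      have h3 : ((K.orthogonalProjectionOnto z : K) : H)
          = z - ((Kᗮ.orthogonalProjectionOnto z : Kᗮ) : H) := by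
        rw [eq_sub_iff_add_eq]
        exact hsum
      rw [h3]
      exact Submodule.sub_mem _ hz_dom h2
  -- L is symmetric
  have hsymL : L.IsFormalAdjoint L := by
    have h := LinearPMap.adjoint_isFormalAdjoint (T := L) hdense
    rwa [heq] at h
  -- T is symmetric
  have hTsym : T.IsFormalAdjoint T := by
    intro x y
    rw [Submodule.coe_inner, Submodule.coe_inner, compressedOp_apply, compressedOp_apply,
      inner_orthProj K _ (y : K).2, inner_orthProj' K _ (x : K).2]
    exact hsymL ⟨((x : K) : H), x.2⟩ ⟨((y : K) : H), y.2⟩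
  have hle : T ≤ T.adjoint := LinearPMap.IsFormalAdjoint.le_adjoint hTdense hTsym
  -- reverse inclusion of domains
  have hsub : T.adjoint.domain ≤ T.domain := by
    intro y hy
    set y' : T.adjoint.domain := ⟨y, hy⟩ with hy'def
    set g : ↥K := T.adjoint y' with hgdef
    have hg : ∀ x : T.domain, ⟪(g : H), ((x : K) : H)⟫
        = ⟪((y : K) : H), ((T x : K) : H)⟫ := by
      intro x
      have h := LinearPMap.adjoint_isFormalAdjoint (T := T) hTdense y' x
      rwa [Submodule.coe_inner, Submodule.coe_inner] at h
    have hyH : ((y : K) : H) ∈ L.adjoint.domain := by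
      apply LinearPMap.mem_adjoint_domain_of_exists
      refine ⟨(⟪L ⟨U₂, hU₂dom⟩, ((y : K) : H)⟫ / ‖U₂‖ ^ 2) • U₂ + (g : H), fun x => ?_⟩
      obtain ⟨c, hcdef⟩ : ∃ c : ℝ, c = ⟪(x : H), U₂⟫ / ‖U₂‖ ^ 2 := ⟨_, rfl⟩
      have hvK : (x : H) - c • U₂ ∈ K := by
        show (x : H) - c • U₂ ∈ (ℝ ∙ U₂)ᗮ
        rw [Submodule.mem_orthogonal_singleton_iff_inner_right, inner_sub_right,
          inner_smul_right, real_inner_self_eq_norm_sq, hcdef, real_inner_comm]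
        field_simp
        ring
      have hvdom : (x : H) - c • U₂ ∈ L.domain :=
        Submodule.sub_mem _ x.2 (Submodule.smul_mem _ _ hU₂dom)
      set vT : T.domain := ⟨⟨(x : H) - c • U₂, hvK⟩, hvdom⟩ with hvTdef
      -- decompose x in L.domain
      have hxdec : (x : L.domain) = c • (⟨U₂, hU₂dom⟩ : L.domain)
          + (⟨(x : H) - c • U₂, hvdom⟩ : L.domain) := by
        apply Subtype.ext
        push_cast
        abel
      have hLx : L x = c • L ⟨U₂, hU₂dom⟩ + L ⟨(x : H) - c • U₂, hvdom⟩ := by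
        calc L x = L (c • (⟨U₂, hU₂dom⟩ : L.domain) + (⟨(x : H) - c • U₂, hvdom⟩ : L.domain)) :=
              congrArg (fun t => L t) hxdec
          _ = c • L ⟨U₂, hU₂dom⟩ + L ⟨(x : H) - c • U₂, hvdom⟩ := by
              rw [LinearPMap.map_add, LinearPMap.map_smul]
      -- the key inner product computation
      have hv1 : ⟪(g : H), (x : H) - c • U₂⟫ = ⟪((y : K) : H), L ⟨(x : H) - c • U₂, hvdom⟩⟫ := by
        have h1 := hg vT
        have h2 : ((T vT : K) : H)
            = ((K.orthogonalProjectionOnto (L ⟨(x : H) - c • U₂, hvdom⟩) : K) : H) := rfl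
        rw [h2, inner_orthProj' K _ (y : K).2] at h1
        exact h1
      have hgU₂ : ⟪(g : H), U₂⟫ = 0 :=
        Submodule.mem_orthogonal_singleton_iff_inner_left.mp g.2
      rw [hLx, inner_add_right, inner_smul_right, inner_add_left, inner_smul_left]
      have hx_split : ⟪(g : H), (x : H)⟫ = c * ⟪(g : H), U₂⟫ + ⟪(g : H), (x : H) - c • U₂⟫ := by
        rw [inner_sub_right, inner_smul_right]; ring
      rw [hx_split, hgU₂, hv1]
      have hcomm1 : ⟪L ⟨U₂, hU₂dom⟩, ((y : K) : H)⟫ = ⟪((y : K) : H), L ⟨U₂, hU₂dom⟩⟫ :=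
        real_inner_comm _ _
      have hcomm2 : ⟪U₂, (x : H)⟫ = ⟪(x : H), U₂⟫ := real_inner_comm _ _
      rw [hcomm1, hcomm2, starRingEnd_apply, star_trivial]
      have hc' : ⟪((y : K) : H), L ⟨U₂, hU₂dom⟩⟫ / ‖U₂‖ ^ 2 * ⟪(x : H), U₂⟫
          = c * ⟪((y : K) : H), L ⟨U₂, hU₂dom⟩⟫ := by
        rw [hcdef]
        field_simp
      rw [hc']
      ring
    rw [heq] at hyH
    exact hyH
  have hdomeq : T.domain = T.adjoint.domain := le_antisymm hle.1 hsub
  have hTeq : T = T.adjoint := LinearPMap.eq_of_le_of_domain_eq hle hdomeq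
  exact ⟨LinearPMap.isSelfAdjoint_def.mpr hTeq.symm, hdomeq.symm.trans rfl⟩
end

section
/- Let u ∈ C²(ℝ²) be a bounded radial solution of u'' + u'/r = γ(u) on (0,∞) with γ ∈ C¹, γ(0) = 0, γ'(0) = 1, and suppose u(r) → 0 and u'(r) → 0 as r → ∞. Setting w₂ = ½(u − u'), there exists R > 0 such that for all r ≥ R the function r ↦ e^{r/2} |w₂(r)| is non-increasing; in particular |u(r) − u'(r)| ≤ C e^{−r/2} for r ≥ R and some constant C. -/
open Filter

/-- Arithmetic fact for Step 1: with `c = a + g - b/r`, `|g| ≤ |a|/8`, `r ≥ 8`,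
we get `a*b ≤ b*b + a*c` (i.e. `z ≤ z'` for `z = u u'`). -/
lemma radial_aux1 (a b c g r : ℝ) (hr : 8 ≤ r) (hg : |g| ≤ |a| / 8)
    (hc : c = a + g - b / r) : a * b ≤ b * b + a * c := by
  have hrpos : (0:ℝ) < r := by linarith
  have h1 : -(|a| * |a| / 8) ≤ a * g := by
    have hh : |a * g| ≤ |a| * |a| / 8 := by
      rw [abs_mul]
      nlinarith [abs_nonneg a, abs_nonneg g]
    linarith [neg_abs_le (a * g)]
  have h2 : a * b / r ≤ |a| * |b| / 8 := by
    have hle : |a| * |b| / r ≤ |a| * |b| / 8 :=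
      div_le_div_of_nonneg_left (by positivity) (by norm_num) (by linarith)
    have h0 : a * b / r ≤ |a| * |b| / r := by
      apply div_le_div_of_nonneg_right _ hrpos.le
      rw [← abs_mul]; exact le_abs_self _
    linarith
  have h3 : |a| * |a| = a * a := abs_mul_abs_self a
  have h4 : |b| * |b| = b * b := abs_mul_abs_self b
  have h5 : a * b ≤ |a| * |b| := le_trans (le_abs_self _) (le_of_eq (abs_mul a b))
  have h6 : (0:ℝ) ≤ (|a| - |b|)^2 := sq_nonneg _
  have hac : a * c = a * a + a * g - a * b / r := by rw [hc]; ring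
  nlinarith

/-- Arithmetic fact for Step 2: with `c = a + g - b/r`, `|g| ≤ |a|/8`, `r ≥ 8`,
and `a*b ≤ 0`, the derivative factor of `e^r w₂²` is nonpositive. -/
lemma radial_aux2 (a b c g r : ℝ) (hr : 8 ≤ r) (hab : a * b ≤ 0) (hg : |g| ≤ |a| / 8)
    (hc : c = a + g - b / r) :
    ((a - b)/2)^2 + 2 * ((a - b)/2)^1 * ((b - c)/2) ≤ 0 := by
  have hrpos : (0:ℝ) < r := by linarith
  have hkey : ((a - b)/2)^2 + 2 * ((a - b)/2)^1 * ((b - c)/2)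
      = -(((a - b)/2)^2) + ((a - b)/2) * (b / r - g) := by
    rw [hc]; ring
  rw [hkey]
  have hqb : |b / r - g| ≤ (|a| + |b|) / 8 := by
    have h1 : |b / r| ≤ |b| / 8 := by
      rw [abs_div, abs_of_pos hrpos]
      exact div_le_div_of_nonneg_left (abs_nonneg _) (by norm_num) (by linarith)
    calc |b / r - g| ≤ |b / r| + |g| := abs_sub _ _
      _ ≤ |b| / 8 + |a| / 8 := add_le_add h1 hg
      _ = (|a| + |b|) / 8 := by ring
  have hwb : |(a - b)/2| ≤ (|a| + |b|) / 2 := by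
    rw [abs_div, abs_of_pos (by norm_num : (0:ℝ) < 2)]
    have := abs_sub a b
    linarith
  have hwq : (a - b)/2 * (b / r - g) ≤ |(a - b)/2| * |b / r - g| :=
    le_trans (le_abs_self _) (le_of_eq (abs_mul _ _))
  have hAB : |(a - b)/2| * |b / r - g| ≤ ((|a| + |b|)/2) * ((|a| + |b|)/8) :=
    mul_le_mul hwb hqb (abs_nonneg _) (by positivity)
  have h3 : |a| * |a| = a * a := abs_mul_abs_self a
  have h4 : |b| * |b| = b * b := abs_mul_abs_self b
  have h6 : (0:ℝ) ≤ (|a| - |b|)^2 := sq_nonneg _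
  nlinarith

/-- Let `u` be a bounded `C²` radial solution of `u'' + u'/r = γ(u)` on `(0,∞)` with `γ ∈ C¹`,
`γ(0) = 0`, `γ'(0) = 1`, and `u(r) → 0`, `u'(r) → 0` as `r → ∞`.  Setting `w₂ = ½(u − u')`,
there is `R > 0` such that `r ↦ e^{r/2} |w₂(r)|` is non-increasing on `[R, ∞)`; in particular
`|u(r) − u'(r)| ≤ C e^{−r/2}` for `r ≥ R` and some constant `C`. -/
theorem radial_ode_exponential_decay
    (u γ : ℝ → ℝ)
    (hu : ContDiff ℝ 2 u) (hγ : ContDiff ℝ 1 γ)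
    (hγ0 : γ 0 = 0) (hγ'0 : deriv γ 0 = 1)
    (hbdd : ∃ Cu : ℝ, ∀ r : ℝ, |u r| ≤ Cu)
    (hode : ∀ r : ℝ, 0 < r → deriv (deriv u) r + deriv u r / r = γ (u r))
    (hu0 : Tendsto u atTop (nhds 0))
    (hu'0 : Tendsto (deriv u) atTop (nhds 0)) :
    ∃ R : ℝ, 0 < R ∧
      AntitoneOn (fun r => Real.exp (r / 2) * |(u r - deriv u r) / 2|) (Set.Ici R) ∧
      ∃ C : ℝ, ∀ r : ℝ, R ≤ r → |u r - deriv u r| ≤ C * Real.exp (-r / 2) := by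
  -- differentiability facts
  have hd1 : Differentiable ℝ u := hu.differentiable (by norm_num)
  have hu2 : ContDiff ℝ ((1 : WithTop ℕ∞) + 1) u := by
    have h : ((1 : WithTop ℕ∞) + 1) = 2 := by norm_num
    rw [h]; exact hu
  have hd2 : Differentiable ℝ (deriv u) :=
    ((contDiff_succ_iff_deriv.mp hu2).2.2).differentiable one_ne_zero
  have hγd : Differentiable ℝ γ := hγ.differentiable one_ne_zero
  -- the nonlinearity γ₁ t = γ t - t is small near 0
  have hcont : ContinuousAt (deriv γ) 0 := (hγ.continuous_deriv le_rfl).continuousAt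
  obtain ⟨δ, hδpos, hδ⟩ : ∃ δ > 0, ∀ t : ℝ, |t| ≤ δ → |deriv γ t - 1| ≤ 1/8 := by
    obtain ⟨ε, hε, h⟩ := Metric.continuousAt_iff.mp hcont (1/8) (by norm_num)
    refine ⟨ε/2, by positivity, fun t ht => ?_⟩
    have h1 : dist t 0 < ε := by rw [Real.dist_eq, sub_zero]; linarith
    have := h h1
    rw [Real.dist_eq, hγ'0] at this
    exact this.le
  have hγ₁bound : ∀ t : ℝ, |t| ≤ δ → |γ t - t| ≤ |t| / 8 := by
    intro t ht
    have hderiv : ∀ x ∈ Metric.closedBall (0:ℝ) δ,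
        HasDerivWithinAt (fun s => γ s - s) (deriv γ x - 1) (Metric.closedBall (0:ℝ) δ) x := by
      intro x _
      exact ((hγd x).hasDerivAt.sub (hasDerivAt_id x)).hasDerivWithinAt
    have hb : ∀ x ∈ Metric.closedBall (0:ℝ) δ, ‖deriv γ x - 1‖ ≤ 1/8 := by
      intro x hx
      rw [Metric.mem_closedBall, Real.dist_eq, sub_zero] at hx
      exact hδ x hx
    have := Convex.norm_image_sub_le_of_norm_hasDerivWithin_le hderiv hb
      (convex_closedBall 0 δ) (Metric.mem_closedBall_self hδpos.le)
      (by simpa [Metric.mem_closedBall, Real.dist_eq] using ht)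
    simp only [hγ0, sub_zero, zero_sub, sub_zero, Real.norm_eq_abs] at this
    linarith
  -- threshold R
  obtain ⟨R₁, hR₁⟩ : ∃ R₁ : ℝ, ∀ r ≥ R₁, |u r| ≤ δ := by
    have := Metric.tendsto_nhds.mp hu0 δ hδpos
    rw [eventually_atTop] at this
    obtain ⟨R₁, h⟩ := this
    exact ⟨R₁, fun r hr => by
      have := h r hr; rw [Real.dist_eq, sub_zero] at this; exact this.le⟩
  set R := max 8 R₁ with hRdef
  have hR8 : (8:ℝ) ≤ R := le_max_left _ _
  have hRpos : (0:ℝ) < R := by linarith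
  -- the ODE rewritten
  have hode' : ∀ r : ℝ, R ≤ r →
      deriv (deriv u) r = u r + (γ (u r) - u r) - deriv u r / r := by
    intro r hr
    have hrpos : (0:ℝ) < r := by linarith
    have := hode r hrpos
    linarith
  have hsmall : ∀ r : ℝ, R ≤ r → |γ (u r) - u r| ≤ |u r| / 8 :=
    fun r hr => hγ₁bound _ (hR₁ r (le_trans (le_max_right _ _) hr))
  -- Step 1 : z = u * u' satisfies z' ≥ z on [R, ∞), hence z ≤ 0 there
  have hz : ∀ r : ℝ, HasDerivAt (fun r => u r * deriv u r)
      (deriv u r * deriv u r + u r * deriv (deriv u) r) r :=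
    fun r => (hd1 r).hasDerivAt.mul (hd2 r).hasDerivAt
  have hkey1 : ∀ r : ℝ, R ≤ r →
      u r * deriv u r ≤ deriv u r * deriv u r + u r * deriv (deriv u) r :=
    fun r hr => radial_aux1 (u r) (deriv u r) (deriv (deriv u) r) (γ (u r) - u r) r
      (le_trans hR8 hr) (hsmall r hr) (hode' r hr)
  have hzle : ∀ r : ℝ, R ≤ r → u r * deriv u r ≤ 0 := by
    by_contra h
    push_neg at h
    obtain ⟨r₀, hr₀R, hr₀⟩ := h
    have hψd : ∀ r : ℝ, HasDerivAt (fun r => Real.exp (-r) * (u r * deriv u r))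
        (-Real.exp (-r) * (u r * deriv u r) +
          Real.exp (-r) * (deriv u r * deriv u r + u r * deriv (deriv u) r)) r := by
      intro r
      have h1 : HasDerivAt (fun r : ℝ => Real.exp (-r)) (-Real.exp (-r)) r := by
        simpa [Function.comp_def] using (Real.hasDerivAt_exp (-r)).comp r ((hasDerivAt_id r).neg)
      simpa [Pi.mul_def] using h1.mul (hz r)
    have hψmono : MonotoneOn (fun r => Real.exp (-r) * (u r * deriv u r)) (Set.Ici r₀) := by
      refine monotoneOn_of_deriv_nonneg (convex_Ici r₀) ?_ ?_ ?_
      · exact fun x _ => ((hψd x).continuousAt).continuousWithinAt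
      · exact fun x _ => ((hψd x).differentiableAt).differentiableWithinAt
      · intro x hx
        rw [interior_Ici] at hx
        have hxR : R ≤ x := le_trans hr₀R hx.le
        rw [(hψd x).deriv]
        have h1 := hkey1 x hxR
        have he := Real.exp_pos (-x)
        nlinarith
    have hmono : ∀ r, r₀ ≤ r → u r₀ * deriv u r₀ ≤ u r * deriv u r := by
      intro r hr
      have h1 := hψmono Set.self_mem_Ici hr hr
      simp only at h1
      have h2 : Real.exp (-r) ≤ Real.exp (-r₀) := Real.exp_le_exp.mpr (by linarith)
      have h3 : (0:ℝ) < Real.exp (-r) := Real.exp_pos _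
      have h4 : (0:ℝ) < Real.exp (-r₀) := Real.exp_pos _
      nlinarith
    have htend : Tendsto (fun r => u r * deriv u r) atTop (nhds 0) := by
      have := hu0.mul hu'0
      simpa using this
    have hev : ∀ᶠ r in atTop, u r * deriv u r < u r₀ * deriv u r₀ :=
      htend.eventually (gt_mem_nhds hr₀)
    obtain ⟨r, hr1, hr2⟩ := (hev.and (eventually_ge_atTop r₀)).exists
    exact absurd (hmono r hr2) (not_le.mpr hr1)
  -- Step 2 : g = exp r * w₂² is non-increasing on [R, ∞)
  have hgd : ∀ r : ℝ, HasDerivAt (fun r => Real.exp r * ((u r - deriv u r)/2)^2)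
      (Real.exp r * ((u r - deriv u r)/2)^2 +
        Real.exp r * (2 * ((u r - deriv u r)/2)^1 * ((deriv u r - deriv (deriv u) r)/2))) r := by
    intro r
    have hw : HasDerivAt (fun r => (u r - deriv u r)/2)
        ((deriv u r - deriv (deriv u) r)/2) r :=
      ((hd1 r).hasDerivAt.sub (hd2 r).hasDerivAt).div_const 2
    exact (Real.hasDerivAt_exp r).mul (hw.pow 2)
  have hgderiv : ∀ x : ℝ, R ≤ x →
      deriv (fun r => Real.exp r * ((u r - deriv u r)/2)^2) x ≤ 0 := by
    intro r hr
    rw [(hgd r).deriv]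
    have haux := radial_aux2 (u r) (deriv u r) (deriv (deriv u) r) (γ (u r) - u r) r
      (le_trans hR8 hr) (hzle r hr) (hsmall r hr) (hode' r hr)
    have he := (Real.exp_pos r).le
    calc Real.exp r * ((u r - deriv u r)/2)^2 +
        Real.exp r * (2 * ((u r - deriv u r)/2)^1 * ((deriv u r - deriv (deriv u) r)/2))
        = Real.exp r * (((u r - deriv u r)/2)^2 +
            2 * ((u r - deriv u r)/2)^1 * ((deriv u r - deriv (deriv u) r)/2)) := by ring
      _ ≤ 0 := mul_nonpos_of_nonneg_of_nonpos he haux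
  have hganti : AntitoneOn (fun r => Real.exp r * ((u r - deriv u r)/2)^2) (Set.Ici R) := by
    refine antitoneOn_of_deriv_nonpos (convex_Ici R) ?_ ?_ ?_
    · exact fun x _ => ((hgd x).continuousAt).continuousWithinAt
    · exact fun x _ => ((hgd x).differentiableAt).differentiableWithinAt
    · intro x hx
      rw [interior_Ici] at hx
      exact hgderiv x hx.le
  -- relation between the target function and g
  have hfg : ∀ r : ℝ, Real.exp (r/2) * |(u r - deriv u r)/2|
      = Real.sqrt (Real.exp r * ((u r - deriv u r)/2)^2) := by
    intro r
    rw [Real.sqrt_mul (Real.exp_pos r).le, Real.sqrt_sq_eq_abs, ← Real.exp_half]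
  refine ⟨R, hRpos, ?_, ?_⟩
  · intro x hx y hy hxy
    show Real.exp (y/2) * |(u y - deriv u y)/2| ≤ Real.exp (x/2) * |(u x - deriv u x)/2|
    rw [hfg, hfg]
    exact Real.sqrt_le_sqrt (hganti hx hy hxy)
  · refine ⟨2 * (Real.exp (R/2) * |(u R - deriv u R)/2|), fun r hr => ?_⟩
    have h1 : Real.exp (r/2) * |(u r - deriv u r)/2| ≤
        Real.exp (R/2) * |(u R - deriv u R)/2| := by
      rw [hfg, hfg]
      exact Real.sqrt_le_sqrt (hganti Set.self_mem_Ici hr hr)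
    have h2 : Real.exp (-r/2) * Real.exp (r/2) = 1 := by
      rw [← Real.exp_add]; ring_nf; exact Real.exp_zero
    have h3 : (0:ℝ) < Real.exp (-r/2) := Real.exp_pos _
    have h4 : |u r - deriv u r| = 2 * |(u r - deriv u r)/2| := by
      rw [abs_div]
      rw [abs_of_pos (by norm_num : (0:ℝ) < 2)]
      ring
    rw [h4]
    calc 2 * |(u r - deriv u r)/2|
        = 2 * (Real.exp (-r/2) * (Real.exp (r/2) * |(u r - deriv u r)/2|)) := by
          rw [← mul_assoc (Real.exp (-r/2)) (Real.exp (r/2)), h2, one_mul]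
      _ ≤ 2 * (Real.exp (-r/2) * (Real.exp (R/2) * |(u R - deriv u R)/2|)) := by
          apply mul_le_mul_of_nonneg_left _ (by norm_num)
          exact mul_le_mul_of_nonneg_left h1 h3.le
      _ = 2 * (Real.exp (R/2) * |(u R - deriv u R)/2|) * Real.exp (-r/2) := by ring
end
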